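/- For each j ∈ {1, …, n} let T_j be a finite set and P_j : T_j → [0, 1] a probability mass function (Σ_{s ∈ T_j} P_j(s) = 1). Let r assign to each type vector t ∈ T_1 × ⋯ × T_n a vector (r_1(t), …, r_n(t)) of nonnegative reals with Σ_{j=1}^n r_j(t) ≤ 1. For j ∈ {1, …, n} and s ∈ T_j define z_j(s) = Σ_{t : t_j = s} (Π_{i=1}^n P_i(t_i)) · r_j(t). Then for every choice of subsets S_1 ⊆ T_1, …, S_n ⊆ T_n: Σ_{j=1}^n Σ_{s ∈ S_j} z_j(s) ≤ 1 − Π_{j=1}^n (1 − Σ_{s ∈ S_j} P_j(s)). -/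

import Mathlib

open Finset

/-- Lemma 6.5: for any selection rule `r` (mapping each type vector to a sub-probability
vector over the indices), letting `z_j(s)` be the probability that the type of vertex `j`
is `s` and `j` is selected (under independent types `t_j ∼ P_j`), one has, for all subsets
`S_j ⊆ T_j`: `Σ_j Σ_{s ∈ S_j} z_j(s) ≤ 1 − Π_j (1 − Σ_{s ∈ S_j} P_j(s))`. -/
theorem selection_rule_polytope_constraint
    (n : ℕ) (T : Fin n → Type*) [∀ j, Fintype (T j)] [∀ j, DecidableEq (T j)]
    (Pm : ∀ j, T j → ℝ) (hP0 : ∀ j s, 0 ≤ Pm j s) (hP1 : ∀ j, ∑ s, Pm j s = 1)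
    (r : (∀ j, T j) → Fin n → ℝ)
    (hr0 : ∀ t j, 0 ≤ r t j) (hr1 : ∀ t, ∑ j, r t j ≤ 1)
    (z : ∀ j, T j → ℝ)
    (hz : ∀ j s, z j s =
      ∑ t ∈ Finset.univ.filter (fun t : ∀ j, T j => t j = s), (∏ i, Pm i (t i)) * r t j)
    (S : ∀ j, Finset (T j)) :
    ∑ j, ∑ s ∈ S j, z j s ≤ 1 - ∏ j, (1 - ∑ s ∈ S j, Pm j s) := by
  classical
  set w : (∀ j, T j) → ℝ := fun t => ∏ i, Pm i (t i) with hw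
  have hw0 : ∀ t, 0 ≤ w t := fun t => Finset.prod_nonneg fun i _ => hP0 i (t i)
  set A : Finset (∀ j, T j) := Fintype.piFinset (fun j => (S j)ᶜ) with hA
  have hAmem : ∀ t, t ∈ A ↔ ∀ j, t j ∉ S j := by
    intro t; simp [hA, Fintype.mem_piFinset]
  -- Step 1: rewrite LHS as a single sum over type vectors.
  have key : ∀ j, ∑ s ∈ S j, z j s
      = ∑ t : (∀ j, T j), if t j ∈ S j then w t * r t j else 0 := by
    intro j
    simp only [hz j, Finset.sum_filter]
    rw [Finset.sum_comm]
    refine Finset.sum_congr rfl fun t _ => ?_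
    simp [eq_comm, hw]
  have hLHS : ∑ j, ∑ s ∈ S j, z j s
      = ∑ t : (∀ j, T j), w t * ∑ j ∈ Finset.univ.filter (fun j => t j ∈ S j), r t j := by
    simp only [key]
    rw [Finset.sum_comm]
    refine Finset.sum_congr rfl fun t _ => ?_
    rw [Finset.mul_sum, Finset.sum_filter]
  -- Step 2: rewrite RHS.
  have hRHS : 1 - ∏ j, (1 - ∑ s ∈ S j, Pm j s) = ∑ t ∈ Finset.univ \ A, w t := by
    have h1 : (1 : ℝ) = ∑ t : (∀ j, T j), w t := by
      calc (1:ℝ) = ∏ j, ∑ s, Pm j s := by simp [hP1]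
        _ = ∑ t ∈ Fintype.piFinset (fun _ => (Finset.univ : Finset (T _))),
              ∏ i, Pm i (t i) := Finset.prod_univ_sum _ _
        _ = ∑ t : (∀ j, T j), w t := by rw [Fintype.piFinset_univ]
    have h2 : ∏ j, (1 - ∑ s ∈ S j, Pm j s) = ∑ t ∈ A, w t := by
      have hc : ∀ j, 1 - ∑ s ∈ S j, Pm j s = ∑ s ∈ (S j)ᶜ, Pm j s := by
        intro j
        have := Finset.sum_add_sum_compl (S j) (Pm j)
        rw [hP1 j] at this
        linarith
      simp only [hc]
      exact Finset.prod_univ_sum _ _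
    have h3 : ∑ t ∈ Finset.univ \ A, w t + ∑ t ∈ A, w t = ∑ t : (∀ j, T j), w t :=
      Finset.sum_sdiff (Finset.subset_univ A)
    linarith
  rw [hLHS, hRHS]
  rw [← Finset.sum_sdiff (Finset.subset_univ A)]
  have hAzero : ∑ t ∈ A, w t * ∑ j ∈ Finset.univ.filter (fun j => t j ∈ S j), r t j = 0 := by
    refine Finset.sum_eq_zero fun t ht => ?_
    have : Finset.univ.filter (fun j => t j ∈ S j) = ∅ := by
      refine Finset.filter_false_of_mem fun j _ => ?_
      exact (hAmem t).1 ht j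
    simp [this]
  rw [hAzero, add_zero]
  refine Finset.sum_le_sum fun t _ => ?_
  have h1 : ∑ j ∈ Finset.univ.filter (fun j => t j ∈ S j), r t j ≤ 1 := by
    refine le_trans (Finset.sum_le_sum_of_subset_of_nonneg (Finset.subset_univ _)
      fun j _ _ => hr0 t j) (hr1 t)
  calc w t * ∑ j ∈ Finset.univ.filter (fun j => t j ∈ S j), r t j
      ≤ w t * 1 := mul_le_mul_of_nonneg_left h1 (hw0 t)
    _ = w t := mul_one _
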